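/- For every n ≥ 1, the expected total path length of the random recursive tree with n nodes satisfies E[TPL_n] = n·H_n − n. -/

import Mathlib

open MeasureTheory ProbabilityTheory

/-- The `n`-th harmonic number `H_n = ∑_{k=1}^n 1/k`. -/
noncomputable def harm (n : ℕ) : ℝ := ∑ k ∈ Finset.range n, (1 : ℝ) / (k + 1)

/-- Clamped depth process, a measurable function of the `J`'s, a.s. equal to `D`. -/
def Dp {Ω : Type*} (J : ℕ → Ω → ℕ) : ℕ → Ω → ℕ
  | 0, _ => 0
  | 1, _ => 0
  | (m+2), ω => if h : J m ω ∈ Finset.Icc 1 (m+1) then Dp J (J m ω) ω + 1 else 0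
decreasing_by simp only [Finset.mem_Icc] at h; omega

lemma Dp_two_eq_sum {Ω : Type*} (J : ℕ → Ω → ℕ) (m : ℕ) (ω : Ω) :
    Dp J (m+2) ω = ∑ v ∈ Finset.Icc 1 (m+1), if J m ω = v then Dp J v ω + 1 else 0 := by
  rw [Dp]
  rw [Finset.sum_ite_eq (Finset.Icc 1 (m+1)) (J m ω) (fun v => Dp J v ω + 1)]
  split <;> simp_all

lemma Dp_le {Ω : Type*} (J : ℕ → Ω → ℕ) : ∀ n ω, Dp J n ω ≤ n := by
  intro n
  induction n using Nat.strong_induction_on with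
  | _ n ih =>
    intro ω
    match n with
    | 0 => simp [Dp]
    | 1 => simp [Dp]
    | (m+2) =>
      rw [Dp]
      split
      · next h =>
        simp only [Finset.mem_Icc] at h
        have := ih (J m ω) (by omega) ω
        omega
      · omega

lemma harm_succ (n : ℕ) : harm (n+1) = harm n + 1/(n+1) := by
  simp [harm, Finset.sum_range_succ]

lemma sum_harm : ∀ m : ℕ, ∑ j ∈ Finset.Icc 1 m, harm (j-1) = m * harm m - m := by
  intro m
  induction m with
  | zero => simp [harm]
  | succ m ih =>
    rw [Finset.sum_Icc_succ_top (by omega : 1 ≤ m+1), ih]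
    have h0 : ((m:ℝ)+1) ≠ 0 := by positivity
    simp only [Nat.add_sub_cancel, harm_succ]
    push_cast
    field_simp
    ring

/-- σ-algebra generated by `J i` for `i < K`. -/
def mS {Ω : Type*} (J : ℕ → Ω → ℕ) (K : ℕ) : MeasurableSpace Ω :=
  ⨆ i ∈ {i : ℕ | i < K}, MeasurableSpace.comap (J i) inferInstance

lemma J_meas_mS {Ω : Type*} (J : ℕ → Ω → ℕ) {K m : ℕ} (hm : m < K) :
    Measurable[mS J K] (J m) := by
  rw [measurable_iff_comap_le]
  exact le_biSup (fun i => MeasurableSpace.comap (J i) inferInstance) hm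

lemma Dp_meas_mS {Ω : Type*} (J : ℕ → Ω → ℕ) :
    ∀ n K, n ≤ K + 1 → Measurable[mS J K] (Dp J n) := by
  intro n
  induction n using Nat.strong_induction_on with
  | _ n ih =>
    intro K hn
    match n with
    | 0 =>
      have h0 : Dp J 0 = fun _ : Ω => 0 := by funext ω; rw [Dp]
      rw [h0]; exact measurable_const
    | 1 =>
      have h0 : Dp J 1 = fun _ : Ω => 0 := by funext ω; rw [Dp]
      rw [h0]; exact measurable_const
    | (m+2) =>
      have heq : Dp J (m+2) = fun ω => ∑ v ∈ Finset.Icc 1 (m+1),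
          if J m ω = v then Dp J v ω + 1 else 0 := funext fun ω => Dp_two_eq_sum J m ω
      rw [heq]
      apply Finset.measurable_sum
      intro v hv
      have hJm : Measurable[mS J K] (J m) := J_meas_mS J (by omega)
      have hset : MeasurableSet[mS J K] {ω | J m ω = v} :=
        hJm (measurableSet_singleton v)
      have hDv : Measurable[mS J K] (fun ω => Dp J v ω + 1) := by
        have : Measurable[mS J K] (Dp J v) := by
          apply ih v ?_ K ?_
          · simp only [Finset.mem_Icc] at hv; omega
          · simp only [Finset.mem_Icc] at hv; omega
        exact this.add measurable_const
      exact Measurable.ite hset hDv measurable_const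

lemma Dp_meas {Ω : Type*} [mΩ : MeasurableSpace Ω] (J : ℕ → Ω → ℕ)
    (hJmeas : ∀ k, Measurable (J k)) (n : ℕ) : Measurable (Dp J n) := by
  have h := Dp_meas_mS J n n (by omega)
  refine h.mono ?_ le_rfl
  apply iSup_le; intro i; apply iSup_le; intro _
  exact (measurable_iff_comap_le.mp (hJmeas i))

lemma Dp_indep {Ω : Type*} [mΩ : MeasurableSpace Ω] {μ : Measure Ω}
    (J : ℕ → Ω → ℕ) (hJmeas : ∀ k, Measurable (J k))
    (hJindep : iIndepFun J μ)
    {j k : ℕ} (hj : j ≤ k + 1) :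
    IndepFun (Dp J j) (J k) μ := by
  have h_le : ∀ i, MeasurableSpace.comap (J i) inferInstance ≤ mΩ :=
    fun i => measurable_iff_comap_le.mp (hJmeas i)
  have hbig : Indep (mS J k)
      (⨆ i ∈ {i : ℕ | i < k}ᶜ, MeasurableSpace.comap (J i) inferInstance) μ :=
    indep_biSup_compl h_le hJindep.iIndep {i : ℕ | i < k}
  rw [IndepFun_iff_Indep]
  refine indep_of_indep_of_le_right (indep_of_indep_of_le_left hbig ?_) ?_
  · exact measurable_iff_comap_le.mp (Dp_meas_mS J j k hj)
  · exact le_biSup (fun i => MeasurableSpace.comap (J i) (inferInstance : MeasurableSpace ℕ))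
      (by simp : k ∈ {i : ℕ | i < k}ᶜ)

theorem rrt_expected_total_path_length
    {Ω : Type*} [MeasurableSpace Ω] (μ : Measure Ω) [IsProbabilityMeasure μ]
    (J : ℕ → Ω → ℕ) (hJmeas : ∀ k, Measurable (J k))
    (hJindep : iIndepFun J μ)
    (hJlaw : ∀ k j, μ {ω | J k ω = j} =
      if j ∈ Finset.Icc 1 (k + 1) then ((k : ENNReal) + 1)⁻¹ else 0)
    (D : ℕ → Ω → ℕ) (hDmeas : ∀ n, Measurable (D n))
    (hD1 : ∀ ω, D 1 ω = 0)
    (hD : ∀ k ω, D (k + 2) ω = D (J k ω) ω + 1) :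
    ∀ n : ℕ, 1 ≤ n →
      ∫ ω, (∑ k ∈ Finset.Icc 1 n, (D k ω : ℝ)) ∂μ = n * harm n - n := by
  classical
  -- boundedness / integrability
  have bdd_int : ∀ (f : Ω → ℝ), Measurable f → ∀ C : ℝ, (∀ ω, ‖f ω‖ ≤ C) → Integrable f μ :=
    fun f hm C h => Integrable.mono' (integrable_const C) hm.aestronglyMeasurable
      (Filter.Eventually.of_forall h)
  have int_Dp : ∀ n, Integrable (fun ω => (Dp J n ω : ℝ)) μ := by
    intro n
    refine bdd_int _ (measurable_from_top.comp (Dp_meas J hJmeas n)) (n : ℝ) fun ω => ?_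
    rw [Real.norm_eq_abs, abs_of_nonneg (by positivity)]
    exact_mod_cast Dp_le J n ω
  -- law of J, real version
  have pJ : ∀ k j, j ∈ Finset.Icc 1 (k+1) → (μ {ω | J k ω = j}).toReal = 1/((k:ℝ)+1) := by
    intro k j hj
    rw [hJlaw k j, if_pos hj, ENNReal.toReal_inv]
    have : ((k : ENNReal) + 1).toReal = (k:ℝ)+1 := by
      rw [ENNReal.toReal_add (by simp) (by simp)]; simp
    rw [this, one_div]
  -- expectation recursion
  have step : ∀ k : ℕ, ∫ ω, (Dp J (k+2) ω : ℝ) ∂μ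
      = (∑ j ∈ Finset.Icc 1 (k+1), ∫ ω, (Dp J j ω : ℝ) ∂μ) / ((k:ℝ)+1) + 1 := by
    intro k
    have hrepr : ∀ ω, (Dp J (k+2) ω : ℝ)
        = ∑ j ∈ Finset.Icc 1 (k+1),
            ((Dp J j ω : ℝ) + 1) * (if J k ω = j then (1:ℝ) else 0) := by
      intro ω
      rw [Dp_two_eq_sum J k ω]
      push_cast
      refine Finset.sum_congr rfl fun j hj => ?_
      by_cases h : J k ω = j <;> simp [h]
    have hXmeas : ∀ j : ℕ, Measurable (fun ω => (Dp J j ω : ℝ) + 1) :=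
      fun j => (measurable_from_top.comp (Dp_meas J hJmeas j)).add measurable_const
    have hYmeas : ∀ j : ℕ, Measurable (fun ω => if J k ω = j then (1:ℝ) else 0) := by
      intro j
      exact Measurable.ite ((hJmeas k) (measurableSet_singleton j))
        measurable_const measurable_const
    have intX : ∀ j : ℕ, Integrable (fun ω => (Dp J j ω : ℝ) + 1) μ :=
      fun j => (int_Dp j).add (integrable_const 1)
    have intY : ∀ j : ℕ, Integrable (fun ω => if J k ω = j then (1:ℝ) else 0) μ := by
      intro j
      refine bdd_int _ (hYmeas j) 1 fun ω => ?_
      split <;> simp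
    have hintterm : ∀ j ∈ Finset.Icc 1 (k+1), Integrable
        (fun ω => ((Dp J j ω : ℝ) + 1) * (if J k ω = j then (1:ℝ) else 0)) μ := by
      intro j _
      refine bdd_int _ ((hXmeas j).mul (hYmeas j)) ((j:ℝ)+1) fun ω => ?_
      rw [norm_mul]
      have h1 : ‖(Dp J j ω : ℝ) + 1‖ ≤ (j:ℝ) + 1 := by
        rw [Real.norm_eq_abs, abs_of_nonneg (by positivity)]
        have : ((Dp J j ω : ℝ)) ≤ (j:ℝ) := Nat.cast_le.mpr (Dp_le J j ω)
        linarith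
      have h2 : ‖(if J k ω = j then (1:ℝ) else 0)‖ ≤ 1 := by split <;> simp
      calc ‖(Dp J j ω : ℝ) + 1‖ * ‖(if J k ω = j then (1:ℝ) else 0)‖
          ≤ ((j:ℝ)+1) * 1 := mul_le_mul h1 h2 (norm_nonneg _) (by positivity)
        _ = (j:ℝ)+1 := mul_one _
    have hterm : ∀ j ∈ Finset.Icc 1 (k+1),
        ∫ ω, ((Dp J j ω : ℝ) + 1) * (if J k ω = j then (1:ℝ) else 0) ∂μ
          = ((∫ ω, (Dp J j ω : ℝ) ∂μ) + 1) * (1/((k:ℝ)+1)) := by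
      intro j hj
      have hind : IndepFun (fun ω => (Dp J j ω : ℝ) + 1)
          (fun ω => if J k ω = j then (1:ℝ) else 0) μ := by
        have h := Dp_indep J hJmeas hJindep (Finset.mem_Icc.mp hj).2
        exact h.comp (measurable_from_top (f := fun a : ℕ => (a:ℝ)+1))
          (measurable_from_top (f := fun b : ℕ => if b = j then (1:ℝ) else 0))
      have hmul : ∫ ω, ((Dp J j ω : ℝ) + 1) * (if J k ω = j then (1:ℝ) else 0) ∂μ
          = (∫ ω, ((Dp J j ω : ℝ) + 1) ∂μ) * ∫ ω, (if J k ω = j then (1:ℝ) else 0) ∂μ :=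
        hind.integral_fun_mul_eq_mul_integral (intX j).aestronglyMeasurable (intY j).aestronglyMeasurable
      have hIX : ∫ ω, ((Dp J j ω : ℝ) + 1) ∂μ = (∫ ω, (Dp J j ω : ℝ) ∂μ) + 1 := by
        rw [integral_add (int_Dp j) (integrable_const 1), integral_const]
        simp
      have hIY : ∫ ω, (if J k ω = j then (1:ℝ) else 0) ∂μ = 1/((k:ℝ)+1) := by
        have hs : MeasurableSet {ω | J k ω = j} := (hJmeas k) (measurableSet_singleton j)
        have : (fun ω => if J k ω = j then (1:ℝ) else 0)
            = Set.indicator {ω | J k ω = j} 1 := by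
          funext ω; by_cases h : J k ω = j <;> simp [Set.indicator, h]
        rw [this, integral_indicator_one hs, measureReal_def, pJ k j hj]
      rw [hmul, hIX, hIY]
    have hk0 : ((k:ℝ)+1) ≠ 0 := by positivity
    calc ∫ ω, (Dp J (k+2) ω : ℝ) ∂μ
        = ∫ ω, ∑ j ∈ Finset.Icc 1 (k+1),
            ((Dp J j ω : ℝ) + 1) * (if J k ω = j then (1:ℝ) else 0) ∂μ :=
          integral_congr_ae (Filter.Eventually.of_forall hrepr)
      _ = ∑ j ∈ Finset.Icc 1 (k+1),
            ∫ ω, ((Dp J j ω : ℝ) + 1) * (if J k ω = j then (1:ℝ) else 0) ∂μ :=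
          integral_finset_sum _ hintterm
      _ = ∑ j ∈ Finset.Icc 1 (k+1), ((∫ ω, (Dp J j ω : ℝ) ∂μ) + 1) * (1/((k:ℝ)+1)) :=
          Finset.sum_congr rfl hterm
      _ = ((∑ j ∈ Finset.Icc 1 (k+1), ∫ ω, (Dp J j ω : ℝ) ∂μ) + ((k:ℝ)+1)) * (1/((k:ℝ)+1)) := by
          rw [← Finset.sum_mul, Finset.sum_add_distrib, Finset.sum_const, Nat.card_Icc]
          norm_num
      _ = (∑ j ∈ Finset.Icc 1 (k+1), ∫ ω, (Dp J j ω : ℝ) ∂μ) / ((k:ℝ)+1) + 1 := by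
          field_simp
  -- solve the recursion
  have eh : ∀ n, 1 ≤ n → ∫ ω, (Dp J n ω : ℝ) ∂μ = harm (n-1) := by
    intro n
    induction n using Nat.strong_induction_on with
    | _ n ih =>
      intro hn
      match n with
      | 1 =>
        have h1 : ∀ ω : Ω, Dp J 1 ω = 0 := fun ω => by rw [Dp]
        simp [h1, harm]
      | (m+2) =>
        rw [step m]
        have hsum : ∑ j ∈ Finset.Icc 1 (m+1), ∫ ω, (Dp J j ω : ℝ) ∂μ
            = ∑ j ∈ Finset.Icc 1 (m+1), harm (j-1) := by
          refine Finset.sum_congr rfl fun j hj => ?_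
          have hj' := Finset.mem_Icc.mp hj
          exact ih j (by omega) hj'.1
        rw [hsum, sum_harm (m+1)]
        have h0 : ((m:ℝ)+1) ≠ 0 := by positivity
        show (((m+1:ℕ):ℝ) * harm (m+1) - ((m+1:ℕ):ℝ)) / ((m:ℝ)+1) + 1 = harm (m+2-1)
        push_cast
        field_simp
        ring
  -- a.s. all J k take values in the right range
  have hae : ∀ᵐ ω ∂μ, ∀ m, J m ω ∈ Finset.Icc 1 (m+1) := by
    rw [ae_all_iff]
    intro m
    have hs : MeasurableSet {ω | J m ω ∈ Finset.Icc 1 (m+1)} :=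
      (hJmeas m) (by trivial : MeasurableSet (((Finset.Icc 1 (m+1) : Finset ℕ) : Set ℕ)))
    have hone : μ {ω | J m ω ∈ Finset.Icc 1 (m+1)} = 1 := by
      have hU : {ω | J m ω ∈ Finset.Icc 1 (m+1)}
          = ⋃ j ∈ Finset.Icc 1 (m+1), {ω | J m ω = j} := by
        ext ω; simp
      rw [hU, measure_biUnion_finset ?_ ?_]
      · rw [Finset.sum_congr rfl (fun j hj => by rw [hJlaw m j, if_pos hj]),
          Finset.sum_const, Nat.card_Icc]
        rw [nsmul_eq_mul]
        rw [show (((m+1+1-1 : ℕ)) : ENNReal) = (m:ENNReal)+1 by push_cast; ring]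
        exact ENNReal.mul_inv_cancel (by simp) (by simp)
      · intro i _ j _ hij
        exact Set.disjoint_left.mpr fun ω h1 h2 => hij (h1.symm.trans h2)
      · exact fun j _ => (hJmeas m) (measurableSet_singleton j)
    rw [ae_iff]
    have hc : {ω | ¬ J m ω ∈ Finset.Icc 1 (m+1)} = {ω | J m ω ∈ Finset.Icc 1 (m+1)}ᶜ := rfl
    rw [hc, measure_compl hs (measure_ne_top μ _), hone, measure_univ, tsub_self]
  -- D = Dp almost surely
  have hDDp : ∀ᵐ ω ∂μ, ∀ n, 1 ≤ n → D n ω = Dp J n ω := by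
    filter_upwards [hae] with ω hω
    intro n
    induction n using Nat.strong_induction_on with
    | _ n ih =>
      intro hn
      match n with
      | 1 => rw [hD1 ω, Dp]
      | (m+2) =>
        have hJm := hω m
        rw [hD m ω, Dp, dif_pos hJm]
        have hJm' := Finset.mem_Icc.mp hJm
        rw [ih (J m ω) (by omega) hJm'.1]
  -- conclusion
  intro n hn
  have hcong : ∫ ω, (∑ k ∈ Finset.Icc 1 n, (D k ω : ℝ)) ∂μ
      = ∫ ω, (∑ k ∈ Finset.Icc 1 n, (Dp J k ω : ℝ)) ∂μ := by
    apply integral_congr_ae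
    filter_upwards [hDDp] with ω hω
    exact Finset.sum_congr rfl fun k hk => by rw [hω k (Finset.mem_Icc.mp hk).1]
  rw [hcong, integral_finset_sum _ (fun k _ => int_Dp k),
    Finset.sum_congr rfl (fun k hk => eh k (Finset.mem_Icc.mp hk).1), sum_harm n]
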